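/- A graph H with v_H ≥ 3 vertices is balanced if and only if λ*(H) = λ(H), where λ(H) = (e_H-2)/(v_H-2), λ*(H) = min over subgraphs F with 2 ≤ v_F < v_H of (e_H - e_F - 1)/(v_H - v_F), and balanced means (e_F-1)/(v_F-2) ≤ λ(H) for all subgraphs F with 3 ≤ v_F < v_H. -/
import Mathlib


/-- `lam H` is the adjusted edge-per-vertex ratio `(e_H - 2)/(v_H - 2)`. -/
noncomputable def lam {V : Type*} [Fintype V] (H : SimpleGraph V) : ℝ :=
  ((H.edgeSet.ncard : ℝ) - 2) / ((Fintype.card V : ℝ) - 2)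

/-- `lamStar H` is the infimum of `(e_H - e_F - 1)/(v_H - v_F)` over subgraphs `F`
with `2 ≤ v_F < v_H`. -/
noncomputable def lamStar {V : Type*} [Fintype V] (H : SimpleGraph V) : ℝ :=
  sInf {x : ℝ | ∃ F : H.Subgraph, 2 ≤ F.verts.ncard ∧ F.verts.ncard < Fintype.card V ∧
    x = ((H.edgeSet.ncard : ℝ) - (F.edgeSet.ncard : ℝ) - 1) /
      ((Fintype.card V : ℝ) - (F.verts.ncard : ℝ))}

/-- `H` is balanced if `(e_F - 1)/(v_F - 2) ≤ lam H` for all subgraphs `F`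
with `3 ≤ v_F < v_H`. -/
def GraphBalanced {V : Type*} [Fintype V] (H : SimpleGraph V) : Prop :=
  ∀ F : H.Subgraph, 3 ≤ F.verts.ncard → F.verts.ncard < Fintype.card V →
    ((F.edgeSet.ncard : ℝ) - 1) / ((F.verts.ncard : ℝ) - 2) ≤ lam H

instance subgraphFinite {V : Type*} [Fintype V] (H : SimpleGraph V) : Finite H.Subgraph := by
  classical
  exact Finite.of_injective (fun F => (F.verts, F.Adj)) (by
    intro F G h
    simp only [Prod.mk.injEq] at h
    exact SimpleGraph.Subgraph.ext h.1 h.2)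

lemma edge_le_one {V : Type*} {H : SimpleGraph V} (F : H.Subgraph)
    (h2 : F.verts.ncard = 2) : F.edgeSet.ncard ≤ 1 := by
  obtain ⟨a, b, hab, hv⟩ := Set.ncard_eq_two.mp h2
  have hsub : F.edgeSet ⊆ {s(a, b)} := by
    rintro e he
    induction e using Sym2.ind with
    | _ x y =>
      rw [SimpleGraph.Subgraph.mem_edgeSet] at he
      have hx : x ∈ F.verts := F.edge_vert he
      have hy : y ∈ F.verts := F.edge_vert he.symm
      have hxy : x ≠ y := (F.adj_sub he).ne
      rw [hv] at hx hy
      simp only [Set.mem_insert_iff, Set.mem_singleton_iff] at hx hy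
      rcases hx with rfl | rfl <;> rcases hy with rfl | rfl <;>
        simp_all [Sym2.eq_swap]
  calc F.edgeSet.ncard ≤ ({s(a,b)} : Set (Sym2 V)).ncard :=
        Set.ncard_le_ncard hsub (Set.finite_singleton _)
    _ = 1 := Set.ncard_singleton _

theorem stmt_2 {V : Type*} [Fintype V] (H : SimpleGraph V)
    (hV : 3 ≤ Fintype.card V) (hE : 1 ≤ H.edgeSet.ncard) :
    GraphBalanced H ↔ lamStar H = lam H := by
  classical
  set v := Fintype.card V with hv
  set e := H.edgeSet.ncard with he
  set S := {x : ℝ | ∃ F : H.Subgraph, 2 ≤ F.verts.ncard ∧ F.verts.ncard < v ∧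
    x = ((e : ℝ) - (F.edgeSet.ncard : ℝ) - 1) / ((v : ℝ) - (F.verts.ncard : ℝ))} with hS
  have hSdef : lamStar H = sInf S := rfl
  have hSfin : S.Finite := by
    apply (Set.finite_range (fun F : H.Subgraph =>
      ((e : ℝ) - (F.edgeSet.ncard : ℝ) - 1) / ((v : ℝ) - (F.verts.ncard : ℝ)))).subset
    rintro x ⟨F, -, -, rfl⟩
    exact ⟨F, rfl⟩
  have hbdd : BddBelow S := hSfin.bddBelow
  have hv2 : (0:ℝ) < (v:ℝ) - 2 := by
    have : (3:ℝ) ≤ (v:ℝ) := by exact_mod_cast hV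
    linarith
  -- lam H ∈ S
  have hmem : lam H ∈ S := by
    obtain ⟨ed, hed⟩ := Set.nonempty_of_ncard_ne_zero (by omega : e ≠ 0)
    induction ed using Sym2.ind with
    | _ a b =>
      rw [SimpleGraph.mem_edgeSet] at hed
      refine ⟨H.subgraphOfAdj hed, ?_, ?_, ?_⟩
      · simp [SimpleGraph.subgraphOfAdj, Set.ncard_pair hed.ne]
      · simp [SimpleGraph.subgraphOfAdj, Set.ncard_pair hed.ne]
        omega
      · rw [SimpleGraph.edgeSet_subgraphOfAdj]
        simp [SimpleGraph.subgraphOfAdj, Set.ncard_pair hed.ne, Set.ncard_singleton, lam]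
        ring
  constructor
  · intro hbal
    rw [hSdef]
    refine le_antisymm (csInf_le hbdd hmem) (le_csInf ⟨_, hmem⟩ ?_)
    rintro x ⟨F, h2, hlt, rfl⟩
    have hkey : ((F.edgeSet.ncard : ℝ) - 1) * ((v:ℝ) - 2) ≤
        ((e:ℝ) - 2) * ((F.verts.ncard : ℝ) - 2) := by
      rcases eq_or_lt_of_le h2 with heq | h3
      · have h1 : F.edgeSet.ncard ≤ 1 := edge_le_one F heq.symm
        have : ((F.edgeSet.ncard : ℝ)) ≤ 1 := by exact_mod_cast h1
        have : ((F.verts.ncard : ℝ)) = 2 := by exact_mod_cast heq.symm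
        nlinarith
      · have hF2 : (0:ℝ) < (F.verts.ncard : ℝ) - 2 := by
          have : (3:ℝ) ≤ (F.verts.ncard : ℝ) := by exact_mod_cast h3
          linarith
        have := hbal F h3 hlt
        rw [lam, div_le_div_iff₀ hF2 hv2] at this
        exact this
    have hd : (0:ℝ) < (v:ℝ) - (F.verts.ncard : ℝ) := by
      have : (F.verts.ncard : ℝ) < (v:ℝ) := by exact_mod_cast hlt
      linarith
    rw [lam, div_le_div_iff₀ hv2 hd]
    nlinarith
  · intro hstar F h3 hlt
    have hxmem : ((e : ℝ) - (F.edgeSet.ncard : ℝ) - 1) / ((v : ℝ) - (F.verts.ncard : ℝ)) ∈ S :=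
      ⟨F, by omega, hlt, rfl⟩
    have hle : lam H ≤ ((e : ℝ) - (F.edgeSet.ncard : ℝ) - 1) / ((v : ℝ) - (F.verts.ncard : ℝ)) := by
      rw [← hstar, hSdef]; exact csInf_le hbdd hxmem
    have hd : (0:ℝ) < (v:ℝ) - (F.verts.ncard : ℝ) := by
      have : (F.verts.ncard : ℝ) < (v:ℝ) := by exact_mod_cast hlt
      linarith
    have hF2 : (0:ℝ) < (F.verts.ncard : ℝ) - 2 := by
      have : (3:ℝ) ≤ (F.verts.ncard : ℝ) := by exact_mod_cast h3
      linarith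
    rw [lam, div_le_div_iff₀ hv2 hd] at hle
    rw [lam, div_le_div_iff₀ hF2 hv2]
    nlinarith
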